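/- Consider the list schedule of a finite list of jobs with nonnegative sizes on m ≥ 1 machines with zero initial loads, and let F be its free time. Then: (a) the minimum machine load is nondecreasing as the jobs are assigned one by one; (b) consequently every job is assigned to a machine whose load at the moment of assignment is at most F; and (c) every job of size at most τ has completion time at most F + τ, for any τ ≥ 0. -/
import Mathlib


/-- The machine of minimum load, ties broken by lowest machine index. -/
noncomputable def bestMachine {m : ℕ} (hm : 0 < m) (ℓ : Fin m → ℝ) : Fin m :=
  (Finset.univ.filter fun i => ∀ j, ℓ i ≤ ℓ j).min' (by
    obtain ⟨i, -, hi⟩ := Finset.exists_min_image Finset.univ ℓ ⟨⟨0, hm⟩, Finset.mem_univ _⟩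
    exact ⟨i, Finset.mem_filter.mpr ⟨Finset.mem_univ _, fun j => hi j (Finset.mem_univ _)⟩⟩)

/-- One step of list scheduling: assign a job of size `s` to the best machine. -/
noncomputable def schedStep {m : ℕ} (hm : 0 < m) (ℓ : Fin m → ℝ) (s : ℝ) : Fin m → ℝ :=
  Function.update ℓ (bestMachine hm ℓ) (ℓ (bestMachine hm ℓ) + s)

/-- Machine loads after list-scheduling `jobs` starting from initial loads `ℓ`. -/
noncomputable def loadsAfter {m : ℕ} (hm : 0 < m) (ℓ : Fin m → ℝ) : List ℝ → (Fin m → ℝ)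
  | [] => ℓ
  | s :: rest => loadsAfter hm (schedStep hm ℓ s) rest

/-- The free time: minimum machine load after all jobs are assigned. -/
noncomputable def freeTime {m : ℕ} (hm : 0 < m) (ℓ : Fin m → ℝ) (jobs : List ℝ) : ℝ :=
  Finset.univ.inf' ⟨⟨0, hm⟩, Finset.mem_univ _⟩ (loadsAfter hm ℓ jobs)

/-- Total completion time of the list schedule. -/
noncomputable def totalCompletion {m : ℕ} (hm : 0 < m) (ℓ : Fin m → ℝ) : List ℝ → ℝ
  | [] => 0
  | s :: rest => (ℓ (bestMachine hm ℓ) + s) + totalCompletion hm (schedStep hm ℓ s) rest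

/-- The sequence of machines to which successive jobs are assigned. -/
noncomputable def assignSeq {m : ℕ} (hm : 0 < m) (ℓ : Fin m → ℝ) : List ℝ → List (Fin m)
  | [] => []
  | s :: rest => bestMachine hm ℓ :: assignSeq hm (schedStep hm ℓ s) rest

/-- The optimal free time of a multiset of jobs: min over orderings, zero initial loads. -/
noncomputable def optFreeTime {m : ℕ} (hm : 0 < m) (J : Multiset ℝ) : ℝ :=
  sInf {F | ∃ l : List ℝ, (l : Multiset ℝ) = J ∧ F = freeTime hm (fun _ => 0) l}

/-- The optimal total completion time of a multiset of jobs: min over orderings. -/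
noncomputable def optTotalCompletion {m : ℕ} (hm : 0 < m) (J : Multiset ℝ) : ℝ :=
  sInf {C | ∃ l : List ℝ, (l : Multiset ℝ) = J ∧ C = totalCompletion hm (fun _ => 0) l}
lemma best_le {m : ℕ} (hm : 0 < m) (ℓ : Fin m → ℝ) (j : Fin m) :
    ℓ (bestMachine hm ℓ) ≤ ℓ j := by
  have hmem := Finset.min'_mem (Finset.univ.filter fun i => ∀ j, ℓ i ≤ ℓ j) (by
    obtain ⟨i, -, hi⟩ := Finset.exists_min_image Finset.univ ℓ ⟨⟨0, hm⟩, Finset.mem_univ _⟩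
    exact ⟨i, Finset.mem_filter.mpr ⟨Finset.mem_univ _, fun j => hi j (Finset.mem_univ _)⟩⟩)
  exact (Finset.mem_filter.mp hmem).2 j

lemma le_schedStep {m : ℕ} (hm : 0 < m) (ℓ : Fin m → ℝ) {s : ℝ} (hs : 0 ≤ s) (i : Fin m) :
    ℓ i ≤ schedStep hm ℓ s i := by
  unfold schedStep Function.update
  by_cases h : i = bestMachine hm ℓ
  · subst h; simp; linarith
  · simp [h]

lemma minLoad_mono {m : ℕ} (hm : 0 < m) {ℓ ℓ' : Fin m → ℝ} (h : ∀ i, ℓ i ≤ ℓ' i) :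
    Finset.univ.inf' ⟨⟨0, hm⟩, Finset.mem_univ _⟩ ℓ ≤
      Finset.univ.inf' ⟨⟨0, hm⟩, Finset.mem_univ _⟩ ℓ' := by
  apply Finset.le_inf'
  intro b _
  exact le_trans (Finset.inf'_le _ (Finset.mem_univ b)) (h b)

lemma minLoad_le_loadsAfter {m : ℕ} (hm : 0 < m) (l : List ℝ) :
    ∀ (ℓ : Fin m → ℝ), (∀ s ∈ l, 0 ≤ s) →
    Finset.univ.inf' ⟨⟨0, hm⟩, Finset.mem_univ _⟩ ℓ ≤
      Finset.univ.inf' ⟨⟨0, hm⟩, Finset.mem_univ _⟩ (loadsAfter hm ℓ l) := by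
  induction l with
  | nil => intro ℓ _; simp [loadsAfter]
  | cons s rest ih =>
    intro ℓ hpos
    have h1 : ∀ i, ℓ i ≤ schedStep hm ℓ s i :=
      le_schedStep hm ℓ (hpos s (by simp)) 
    calc Finset.univ.inf' ⟨⟨0, hm⟩, Finset.mem_univ _⟩ ℓ
        ≤ Finset.univ.inf' ⟨⟨0, hm⟩, Finset.mem_univ _⟩ (schedStep hm ℓ s) :=
          minLoad_mono hm h1
      _ ≤ _ := ih _ (fun x hx => hpos x (by simp [hx]))

lemma loadsAfter_append {m : ℕ} (hm : 0 < m) (l₁ l₂ : List ℝ) :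
    ∀ ℓ : Fin m → ℝ, loadsAfter hm ℓ (l₁ ++ l₂) = loadsAfter hm (loadsAfter hm ℓ l₁) l₂ := by
  induction l₁ with
  | nil => intro ℓ; simp [loadsAfter]
  | cons s rest ih => intro ℓ; simp [loadsAfter, ih]

lemma best_eq_minLoad {m : ℕ} (hm : 0 < m) (ℓ : Fin m → ℝ) :
    ℓ (bestMachine hm ℓ) = Finset.univ.inf' ⟨⟨0, hm⟩, Finset.mem_univ _⟩ ℓ := by
  apply le_antisymm
  · exact Finset.le_inf' _ _ (fun b _ => best_le hm ℓ b)
  · exact Finset.inf'_le _ (Finset.mem_univ _)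

/-- (a) the minimum machine load is nondecreasing as jobs are
assigned; (b) every job is assigned to a machine of load at most F at the
moment of assignment; (c) every job of size at most τ completes by F + τ. -/
theorem stmt17 (m : ℕ) (hm : 0 < m) (jobs : List ℝ) (hjobs : ∀ s ∈ jobs, 0 ≤ s)
    (τ : ℝ) (hτ : 0 ≤ τ) :
    (∀ t t', t ≤ t' → t' ≤ jobs.length →
      freeTime hm (fun _ => 0) (jobs.take t) ≤
        freeTime hm (fun _ => 0) (jobs.take t')) ∧
    (∀ t, t < jobs.length →
      loadsAfter hm (fun _ => 0) (jobs.take t)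
          (bestMachine hm (loadsAfter hm (fun _ => 0) (jobs.take t))) ≤
        freeTime hm (fun _ => 0) jobs) ∧
    (∀ t, t < jobs.length → jobs.getD t 0 ≤ τ →
      loadsAfter hm (fun _ => 0) (jobs.take t)
          (bestMachine hm (loadsAfter hm (fun _ => 0) (jobs.take t))) +
        jobs.getD t 0 ≤ freeTime hm (fun _ => 0) jobs + τ) := by
  have key : ∀ t t', t ≤ t' →
      freeTime hm (fun _ => 0) (jobs.take t) ≤
        freeTime hm (fun _ => 0) (jobs.take t') := by
    intro t t' htt
    have hsplit : jobs.take t' = jobs.take t ++ (jobs.drop t).take (t' - t) := by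
      rw [← List.take_add]
      congr 1
      omega
    unfold freeTime
    rw [hsplit, loadsAfter_append]
    apply minLoad_le_loadsAfter
    intro s hs
    exact hjobs s (List.mem_of_mem_drop (List.mem_of_mem_take hs))
  have keyb : ∀ t, t < jobs.length →
      loadsAfter hm (fun _ => 0) (jobs.take t)
          (bestMachine hm (loadsAfter hm (fun _ => 0) (jobs.take t))) ≤
        freeTime hm (fun _ => 0) jobs := by
    intro t ht
    rw [best_eq_minLoad hm (loadsAfter hm (fun _ => 0) (jobs.take t))]
    have := key t jobs.length (le_of_lt ht)
    rwa [List.take_length, freeTime] at this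
  refine ⟨fun t t' h _ => key t t' h, keyb, fun t ht hle => ?_⟩
  have := keyb t ht
  linarith
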